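/- Let N' = Cent_{Perm(X)}(N) be the centralizer of N in Perm(X), which is a regular subgroup normalized by ρ(G), and let E[N'] carry the analogous G-action (g acting on coefficients as Galois automorphisms and on N' by conjugation via ρ). Suppose f : X → E is G-fixed. Then every G-fixed m : X → E has the form m = z • f for some G-fixed z ∈ E[N] if and only if every G-fixed m : X → E has the form m = z' • f for some G-fixed z' ∈ E[N']. (Theorem 1.1, stated at the level of the fixed-point model M^G of L: an element generates L as an H₁-module if and only if it generates L as an H₂-module, for commuting Hopf–Galois structures.) -/

import Mathlib

/-- The action of the group algebra `E[N]` of a subgroup `N ≤ Perm X` on `Map(X, E)`: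
`(η • f)(y) = f(η⁻¹ y)`, extended `E`-linearly. -/
noncomputable def permAct {E X : Type*} [Field E]
    (N : Subgroup (Equiv.Perm X))
    (z : MonoidAlgebra E ↥N) (f : X → E) : X → E :=
  fun y => Finsupp.sum z.coeff fun η c => c * f ((η : Equiv.Perm X)⁻¹ y)

/-- `f : X → E` is fixed by the semilinear action of `G = Gal(E/K)` on `Map(X, E)` given by
`(g · f)(y) = g (f ((ρ g)⁻¹ y))`. -/
def IsGFixedFun {K E X : Type*} [Field K] [Field E] [Algebra K E]
    (ρ : (E ≃ₐ[K] E) →* Equiv.Perm X) (f : X → E) : Prop :=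
  ∀ (g : E ≃ₐ[K] E) (y : X), g (f ((ρ g)⁻¹ y)) = f y

/-- `z ∈ E[N]` is fixed by the action of `G = Gal(E/K)` on the group algebra `E[N]`, where `G`
acts on coefficients as Galois automorphisms and on `N` by conjugation via `ρ`. -/
def IsGFixedAlg {K E X : Type*} [Field K] [Field E] [Algebra K E]
    (ρ : (E ≃ₐ[K] E) →* Equiv.Perm X) (N : Subgroup (Equiv.Perm X))
    (z : MonoidAlgebra E ↥N) : Prop :=
  ∀ (g : E ≃ₐ[K] E) (η : Equiv.Perm X) (h : η ∈ N) (h' : ρ g * η * (ρ g)⁻¹ ∈ N),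
    g (z.coeff ⟨η, h⟩) = z.coeff ⟨ρ g * η * (ρ g)⁻¹, h'⟩

section Basic
variable {E X : Type*} [Field E]

lemma permAct_eq_sum (N : Subgroup (Equiv.Perm X)) [Fintype ↥N]
    (z : MonoidAlgebra E ↥N) (f : X → E) (y : X) :
    permAct N z f y = ∑ η : ↥N, z.coeff η * f ((η : Equiv.Perm X)⁻¹ y) :=
  Finsupp.sum_fintype _ _ (fun a => zero_mul _)

/-- Bundled linear version of `permAct`. -/
noncomputable def permL (N : Subgroup (Equiv.Perm X)) [Fintype ↥N] (f : X → E) :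
    MonoidAlgebra E ↥N →ₗ[E] (X → E) where
  toFun z := permAct N z f
  map_add' z w := by
    funext y
    simp only [Pi.add_apply, permAct_eq_sum]
    rw [← Finset.sum_add_distrib]
    refine Finset.sum_congr rfl fun η _ => ?_
    have : (z + w).coeff η = z.coeff η + w.coeff η := rfl
    rw [this, add_mul]
  map_smul' c z := by
    funext y
    simp only [RingHom.id_apply, Pi.smul_apply, permAct_eq_sum, smul_eq_mul, Finset.mul_sum]
    refine Finset.sum_congr rfl fun η _ => ?_
    have : (c • z).coeff η = c * z.coeff η := rfl
    rw [this, mul_assoc]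

lemma permL_apply (N : Subgroup (Equiv.Perm X)) [Fintype ↥N] (f : X → E)
    (z : MonoidAlgebra E ↥N) : permL N f z = permAct N z f := rfl

lemma permAct_zero_fun (N : Subgroup (Equiv.Perm X)) (z : MonoidAlgebra E ↥N) :
    permAct N z (0 : X → E) = 0 := by
  funext y
  simp [permAct]

/-- Commuting subgroups give commuting actions. -/
lemma permAct_comm (N M : Subgroup (Equiv.Perm X)) [Fintype ↥N] [Fintype ↥M]
    (hcomm : ∀ a : ↥N, ∀ b : ↥M, Commute (a : Equiv.Perm X) (b : Equiv.Perm X))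
    (z : MonoidAlgebra E ↥N) (w : MonoidAlgebra E ↥M) (f : X → E) :
    permAct N z (permAct M w f) = permAct M w (permAct N z f) := by
  funext y
  simp only [permAct_eq_sum, Finset.mul_sum]
  rw [Finset.sum_comm]
  refine Finset.sum_congr rfl fun μ _ => Finset.sum_congr rfl fun η _ => ?_
  have hpt : (μ : Equiv.Perm X)⁻¹ ((η : Equiv.Perm X)⁻¹ y)
      = (η : Equiv.Perm X)⁻¹ ((μ : Equiv.Perm X)⁻¹ y) := by
    rw [← Equiv.Perm.mul_apply, ← Equiv.Perm.mul_apply, ← mul_inv_rev, ← mul_inv_rev,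
      (hcomm η μ).eq]
  rw [hpt, mul_left_comm]
end Basic
section Delta
variable {E X : Type*} [Field E]

/-- Evaluation of the action on a delta function, given injectivity of the orbit map. -/
lemma permAct_delta (N : Subgroup (Equiv.Perm X)) [Fintype ↥N] [DecidableEq X] (x₀ : X)
    (hinj : Function.Injective fun η : ↥N => (η : Equiv.Perm X) x₀)
    (z : MonoidAlgebra E ↥N) (η₀ : ↥N) :
    permAct N z (fun w => if w = x₀ then (1 : E) else 0) ((η₀ : Equiv.Perm X) x₀) = z.coeff η₀ := by
  rw [permAct_eq_sum]
  rw [Finset.sum_eq_single η₀]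
  · simp
  · intro η _ hne
    have : ¬ ((η : Equiv.Perm X)⁻¹ ((η₀ : Equiv.Perm X) x₀) = x₀) := by
      intro h
      apply hne
      apply hinj
      show (η : Equiv.Perm X) x₀ = (η₀ : Equiv.Perm X) x₀
      have := congrArg (η : Equiv.Perm X) h
      simpa using this.symm
    simp only [this, if_false, mul_zero]
  · intro h; exact absurd (Finset.mem_univ η₀) h

/-- If the action of `z` kills everything, `z = 0`. -/
lemma permAct_faithful (N : Subgroup (Equiv.Perm X)) [Fintype ↥N] (x₀ : X)
    (hinj : Function.Injective fun η : ↥N => (η : Equiv.Perm X) x₀)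
    (z : MonoidAlgebra E ↥N)
    (h : ∀ m : X → E, permAct N z m = 0) : z = 0 := by
  classical
  ext η₀
  have := congrFun (h fun w => if w = x₀ then (1 : E) else 0) ((η₀ : Equiv.Perm X) x₀)
  rw [permAct_delta N x₀ hinj z η₀] at this
  simpa using this

end Delta

section GAction
variable {K E X : Type*} [Field K] [Field E] [Algebra K E]
variable (ρ : (E ≃ₐ[K] E) →* Equiv.Perm X)
variable (N : Subgroup (Equiv.Perm X))

/-- Conjugation by `ρ g` as an equivalence of a normalized subgroup. -/
def conjE (hnorm : ∀ (g : E ≃ₐ[K] E) (η : Equiv.Perm X), η ∈ N ↔ ρ g * η * (ρ g)⁻¹ ∈ N)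
    (g : E ≃ₐ[K] E) : ↥N ≃ ↥N where
  toFun η := ⟨ρ g * (η : Equiv.Perm X) * (ρ g)⁻¹, (hnorm g η).1 η.2⟩
  invFun η := ⟨(ρ g)⁻¹ * (η : Equiv.Perm X) * ρ g, by
    have h := (hnorm g⁻¹ (η : Equiv.Perm X)).1 η.2
    rwa [map_inv, inv_inv] at h⟩
  left_inv η := by
    ext
    simp [mul_assoc]
  right_inv η := by
    ext
    simp [mul_assoc]

lemma conjE_coe (hnorm : ∀ (g : E ≃ₐ[K] E) (η : Equiv.Perm X), η ∈ N ↔ ρ g * η * (ρ g)⁻¹ ∈ N)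
    (g : E ≃ₐ[K] E) (η : ↥N) :
    ((conjE ρ N hnorm g η : ↥N) : Equiv.Perm X) = ρ g * (η : Equiv.Perm X) * (ρ g)⁻¹ := rfl

variable [Fintype ↥N]

/-- The core semilinearity computation. -/
lemma permAct_semilinear
    (hnorm : ∀ (g : E ≃ₐ[K] E) (η : Equiv.Perm X), η ∈ N ↔ ρ g * η * (ρ g)⁻¹ ∈ N)
    (f : X → E) (hf : IsGFixedFun ρ f) (g : E ≃ₐ[K] E) (z : MonoidAlgebra E ↥N) (y : X) :
    g (permAct N z f ((ρ g)⁻¹ y)) =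
      ∑ η : ↥N, g (z.coeff η) * f (((conjE ρ N hnorm g η : ↥N) : Equiv.Perm X)⁻¹ y) := by
  rw [permAct_eq_sum, map_sum]
  refine Finset.sum_congr rfl fun η _ => ?_
  rw [map_mul]
  congr 1
  have hpt : (η : Equiv.Perm X)⁻¹ ((ρ g)⁻¹ y)
      = (ρ g)⁻¹ ((((conjE ρ N hnorm g η : ↥N) : Equiv.Perm X))⁻¹ y) := by
    rw [conjE_coe]
    simp [mul_inv_rev, Equiv.Perm.mul_apply]
  rw [hpt]
  exact hf g _

/-- The Galois action on the group algebra. -/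
noncomputable def gAct
    (hnorm : ∀ (g : E ≃ₐ[K] E) (η : Equiv.Perm X), η ∈ N ↔ ρ g * η * (ρ g)⁻¹ ∈ N)
    (g : E ≃ₐ[K] E) (z : MonoidAlgebra E ↥N) : MonoidAlgebra E ↥N :=
  MonoidAlgebra.ofCoeff (Finsupp.equivMapDomain (conjE ρ N hnorm g) (Finsupp.mapRange g (map_zero g) z.coeff))

lemma gAct_apply (hnorm : ∀ (g : E ≃ₐ[K] E) (η : Equiv.Perm X), η ∈ N ↔ ρ g * η * (ρ g)⁻¹ ∈ N)
    (g : E ≃ₐ[K] E) (z : MonoidAlgebra E ↥N) (η : ↥N) :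
    (gAct ρ N hnorm g z).coeff (conjE ρ N hnorm g η) = g (z.coeff η) := by
  show Finsupp.equivMapDomain _ _ (conjE ρ N hnorm g η) = _
  rw [Finsupp.equivMapDomain_apply, Equiv.symm_apply_apply]
  rfl

lemma permAct_gAct (hnorm : ∀ (g : E ≃ₐ[K] E) (η : Equiv.Perm X), η ∈ N ↔ ρ g * η * (ρ g)⁻¹ ∈ N)
    (g : E ≃ₐ[K] E) (z : MonoidAlgebra E ↥N) (f : X → E) (y : X) :
    permAct N (gAct ρ N hnorm g z) f y =
      ∑ η : ↥N, g (z.coeff η) * f (((conjE ρ N hnorm g η : ↥N) : Equiv.Perm X)⁻¹ y) := by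
  rw [permAct_eq_sum]
  refine (Fintype.sum_equiv (conjE ρ N hnorm g) _ _ fun η => ?_).symm
  rw [gAct_apply]

/-- A `G`-fixed `z` applied to a `G`-fixed `f` yields a `G`-fixed function. -/
lemma isGFixedFun_permAct
    (hnorm : ∀ (g : E ≃ₐ[K] E) (η : Equiv.Perm X), η ∈ N ↔ ρ g * η * (ρ g)⁻¹ ∈ N)
    (f : X → E) (hf : IsGFixedFun ρ f) (z : MonoidAlgebra E ↥N) (hz : IsGFixedAlg ρ N z) :
    IsGFixedFun ρ (permAct N z f) := by
  intro g y
  rw [permAct_semilinear ρ N hnorm f hf g z y]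
  rw [permAct_eq_sum]
  refine Fintype.sum_equiv (conjE ρ N hnorm g) _ _ fun η => ?_
  congr 1
  have : (conjE ρ N hnorm g η : ↥N) =
      ⟨ρ g * (η : Equiv.Perm X) * (ρ g)⁻¹, (hnorm g η).1 η.2⟩ := rfl
  rw [this, ← hz g (η : Equiv.Perm X) η.2 ((hnorm g η).1 η.2)]

/-- If `gAct g z = z` for all `g`, then `z` is `G`-fixed. -/
lemma isGFixedAlg_of_gAct_fixed
    (hnorm : ∀ (g : E ≃ₐ[K] E) (η : Equiv.Perm X), η ∈ N ↔ ρ g * η * (ρ g)⁻¹ ∈ N)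
    (z : MonoidAlgebra E ↥N) (h : ∀ g, gAct ρ N hnorm g z = z) : IsGFixedAlg ρ N z := by
  intro g η hη hη'
  have h1 := gAct_apply ρ N hnorm g z ⟨η, hη⟩
  rw [h g] at h1
  rw [← h1]
  rfl

end GAction
section Span
variable {K E X : Type*} [Field K] [Field E] [Algebra K E]
variable [FiniteDimensional K E] [Fintype X]
variable (ρ : (E ≃ₐ[K] E) →* Equiv.Perm X)

/-- Trace elements: `t c x = ∑_g g(c) δ_{ρ(g) x}` is `G`-fixed. -/
lemma isGFixedFun_trace [DecidableEq X] (c : E) (x : X) :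
    IsGFixedFun ρ (fun y => ∑ g : (E ≃ₐ[K] E), g c * (if y = ρ g x then (1:E) else 0)) := by
  intro h y
  rw [map_sum]
  refine Fintype.sum_equiv (Equiv.mulLeft h) _ _ fun g => ?_
  rw [map_mul, apply_ite h, map_one, map_zero]
  have hiff : ((ρ h)⁻¹ y = ρ g x) ↔ (y = ρ ((Equiv.mulLeft h) g) x) := by
    simp only [Equiv.coe_mulLeft, map_mul, Equiv.Perm.mul_apply]
    constructor
    · intro hh
      have := congrArg (fun w => ρ h w) hh
      simpa using this
    · intro hh
      have := congrArg (fun w => (ρ h)⁻¹ w) hh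
      simpa using this
  rw [if_congr hiff rfl rfl]
  rfl

/-- The `G`-fixed functions span `Map(X, E)` over `E`. -/
lemma span_isGFixedFun_eq_top :
    Submodule.span E {m : X → E | IsGFixedFun ρ m} = ⊤ := by
  classical
  by_contra hne
  have : ∃ v : X → E, v ∉ Submodule.span E {m : X → E | IsGFixedFun ρ m} := by
    by_contra hv
    push_neg at hv
    exact hne (Submodule.eq_top_iff'.2 hv)
  obtain ⟨v, hv⟩ := this
  obtain ⟨φ, hφv, hφp⟩ := Submodule.exists_dual_map_eq_bot_of_notMem hv inferInstance
  have hφfix : ∀ m : X → E, IsGFixedFun ρ m → φ m = 0 := by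
    intro m hm
    have : φ m ∈ Submodule.map φ (Submodule.span E {m : X → E | IsGFixedFun ρ m}) :=
      ⟨m, Submodule.subset_span hm, rfl⟩
    rw [hφp] at this
    exact (Submodule.mem_bot E).1 this
  -- the deltas
  set δ : X → (X → E) := fun x => fun y => if y = x then (1:E) else 0 with hδ
  have hdelta : ∀ x : X, φ (δ x) = 0 := by
    intro x
    -- linear independence of characters
    have hli : LinearIndependent E (fun g : (E ≃ₐ[K] E) => (g : E → E)) := by
      refine (linearIndependent_monoidHom E E).comp
        (fun g : (E ≃ₐ[K] E) => (g : E →* E)) fun g g' hgg' => ?_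
      ext a
      exact DFunLike.congr_fun hgg' a
    have key : ∀ c : E, ∑ g : (E ≃ₐ[K] E), φ (δ (ρ g x)) * g c = 0 := by
      intro c
      have h0 := hφfix _ (isGFixedFun_trace ρ c x)
      have hexp : (fun y => ∑ g : (E ≃ₐ[K] E), g c * (if y = ρ g x then (1:E) else 0))
          = ∑ g : (E ≃ₐ[K] E), g c • δ (ρ g x) := by
        funext y
        rw [Finset.sum_apply]
        rfl
      rw [hexp, map_sum] at h0
      simpa [mul_comm] using h0
    have hall := Fintype.linearIndependent_iff.1 hli (fun g => φ (δ (ρ g x))) ?_ 1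
    · simpa using hall
    · funext c
      rw [Finset.sum_apply]
      simpa [smul_eq_mul] using key c
  -- conclude φ = 0 on everything, contradiction
  apply hφv
  have hv_expand : v = ∑ x : X, v x • δ x := by
    funext y
    rw [Finset.sum_apply]
    simp only [Pi.smul_apply, smul_eq_mul, hδ, mul_ite, mul_one, mul_zero]
    rw [Finset.sum_ite_eq Finset.univ y v]
    simp
  rw [hv_expand, map_sum]
  simp [hdelta]
end Span
section Char
variable {K E X : Type*} [Field K] [Field E] [Algebra K E]
variable [FiniteDimensional K E] [Fintype X]
variable (ρ : (E ≃ₐ[K] E) →* Equiv.Perm X)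
variable (M : Subgroup (Equiv.Perm X)) [Fintype ↥M]

noncomputable def malgEquiv : MonoidAlgebra E ↥M ≃ₗ[E] (↥M → E) :=
  (MonoidAlgebra.coeffLinearEquiv E).trans (Finsupp.linearEquivFunOnFinite E E ↥M)

instance : FiniteDimensional E (MonoidAlgebra E ↥M) :=
  Module.Finite.equiv (malgEquiv M).symm

lemma finrank_malg : Module.finrank E (MonoidAlgebra E ↥M) = Fintype.card ↥M := by
  rw [(malgEquiv M).finrank_eq, Module.finrank_pi]

lemma permL_inj_iff_surj (hcard : Fintype.card ↥M = Fintype.card X) (f : X → E) :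
    Function.Injective (permL M f) ↔ Function.Surjective (permL M f) := by
  refine LinearMap.injective_iff_surjective_of_finrank_eq_finrank ?_
  rw [finrank_malg, Module.finrank_pi, hcard]

/-- The `G`-fixed generation condition is equivalent to surjectivity of `permL`. -/
lemma cond_iff_surj
    (hM : ∀ (g : E ≃ₐ[K] E) (η : Equiv.Perm X), η ∈ M ↔ ρ g * η * (ρ g)⁻¹ ∈ M)
    (hcard : Fintype.card ↥M = Fintype.card X)
    (f : X → E) (hf : IsGFixedFun ρ f) :
    (∀ m : X → E, IsGFixedFun ρ m →
      ∃ z : MonoidAlgebra E ↥M, IsGFixedAlg ρ M z ∧ permAct M z f = m) ↔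
      Function.Surjective (permL M f) := by
  constructor
  · intro hcond
    rw [← LinearMap.range_eq_top]
    rw [← top_le_iff, ← span_isGFixedFun_eq_top ρ, Submodule.span_le]
    intro m hm
    obtain ⟨z, _, hz2⟩ := hcond m hm
    exact ⟨z, hz2⟩
  · intro hsurj m hm
    have hinj : Function.Injective (permL M f) := (permL_inj_iff_surj M hcard f).2 hsurj
    obtain ⟨z, hz⟩ := hsurj m
    have hfix : ∀ g, gAct ρ M hM g z = z := by
      intro g
      apply hinj
      funext y
      rw [permL_apply, permAct_gAct, ← permAct_semilinear ρ M hM f hf g z y,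
        show permAct M z f = m from hz, hz]
      exact hm g y
    exact ⟨z, isGFixedAlg_of_gAct_fixed ρ M hM z hfix,
      funext fun y => congrFun hz y⟩

/-- The heart: commuting regular subgroups. Surjectivity for `M` implies it for `M'`. -/
lemma surj_transfer (M' : Subgroup (Equiv.Perm X)) [Fintype ↥M'] (x₀ : X)
    (hinj' : Function.Injective fun η : ↥M' => (η : Equiv.Perm X) x₀)
    (hcard' : Fintype.card ↥M' = Fintype.card X)
    (hcomm : ∀ a : ↥M, ∀ b : ↥M', Commute (a : Equiv.Perm X) (b : Equiv.Perm X))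
    (f : X → E)
    (hsurj : Function.Surjective (permL M f)) :
    Function.Surjective (permL M' f) := by
  rw [← permL_inj_iff_surj M' hcard' f]
  rw [← LinearMap.ker_eq_bot]
  rw [Submodule.eq_bot_iff]
  intro z' hz'
  rw [LinearMap.mem_ker] at hz'
  have hall : ∀ m : X → E, permAct M' z' m = 0 := by
    intro m
    obtain ⟨z, hz⟩ := hsurj m
    rw [← hz, permL_apply, ← permAct_comm M M' hcomm z z' f]
    rw [permL_apply] at hz'
    rw [hz', permAct_zero_fun]
  exact permAct_faithful M' x₀ hinj' z' hall

end Char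

/-- Theorem 1.1, stated at the level of the fixed-point model `M^G` of `L`: let `N ≤ Perm X`
be a regular subgroup normalized by `ρ(G)`, let `N' = Cent_{Perm X}(N)` (with the analogous
`G`-action on `E[N']`), and let `f : X → E` be `G`-fixed. Then every `G`-fixed `m : X → E`
has the form `m = z • f` for some `G`-fixed `z ∈ E[N]` if and only if every `G`-fixed
`m : X → E` has the form `m = z' • f` for some `G`-fixed `z' ∈ E[N']`. -/
theorem fixed_generator_iff_fixed_generator_centralizer
    {K E X : Type*} [Field K] [Field E] [Algebra K E]
    [FiniteDimensional K E] [IsGalois K E]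
    [Fintype X] [Nonempty X]
    (ρ : (E ≃ₐ[K] E) →* Equiv.Perm X)
    (N : Subgroup (Equiv.Perm X))
    (htrans : ∀ y z : X, ∃ η ∈ N, η y = z)
    (hcard : Nat.card N = Nat.card X)
    (hnorm : ∀ (g : E ≃ₐ[K] E) (η : Equiv.Perm X), η ∈ N ↔ ρ g * η * (ρ g)⁻¹ ∈ N)
    (f : X → E) (hf : IsGFixedFun ρ f) :
    (∀ m : X → E, IsGFixedFun ρ m →
        ∃ z : MonoidAlgebra E ↥N, IsGFixedAlg ρ N z ∧ permAct N z f = m) ↔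
      (∀ m : X → E, IsGFixedFun ρ m →
        ∃ z' : MonoidAlgebra E ↥(Subgroup.centralizer (N : Set (Equiv.Perm X))),
          IsGFixedAlg ρ (Subgroup.centralizer (N : Set (Equiv.Perm X))) z' ∧
            permAct (Subgroup.centralizer (N : Set (Equiv.Perm X))) z' f = m) := by
  classical
  set N' := Subgroup.centralizer (N : Set (Equiv.Perm X)) with hN'
  obtain ⟨x₀⟩ := (inferInstance : Nonempty X)
  -- finiteness of N
  have hfinN : Finite ↥N := by
    have hpos : 0 < Nat.card ↥N := by
      rw [hcard, Nat.card_eq_fintype_card]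
      exact Fintype.card_pos
    exact (Nat.card_pos_iff.mp hpos).2
  cases nonempty_fintype ↥N
  have hcardN : Fintype.card ↥N = Fintype.card X := by
    rw [← Nat.card_eq_fintype_card, ← Nat.card_eq_fintype_card, hcard]
  -- the orbit map of N is bijective
  have horbN : Function.Bijective fun η : ↥N => (η : Equiv.Perm X) x₀ := by
    rw [Fintype.bijective_iff_surjective_and_card]
    refine ⟨fun y => ?_, hcardN⟩
    obtain ⟨η, hη, he⟩ := htrans x₀ y
    exact ⟨⟨η, hη⟩, he⟩
  -- N' is normalized by ρ(G)
  have hnorm' : ∀ (g : E ≃ₐ[K] E) (η : Equiv.Perm X), η ∈ N' ↔ ρ g * η * (ρ g)⁻¹ ∈ N' := by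
    have key : ∀ (g : E ≃ₐ[K] E) (η : Equiv.Perm X), η ∈ N' → ρ g * η * (ρ g)⁻¹ ∈ N' := by
      intro g η hη
      rw [hN', Subgroup.mem_centralizer_iff] at hη ⊢
      intro μ hμ
      have hμ' : (ρ g)⁻¹ * μ * ρ g ∈ N := by
        have h1 := (hnorm g⁻¹ μ).1 hμ
        rwa [map_inv, inv_inv] at h1
      have hc := hη _ hμ'
      calc μ * (ρ g * η * (ρ g)⁻¹)
          = ρ g * (((ρ g)⁻¹ * μ * ρ g) * η) * (ρ g)⁻¹ := by group
        _ = ρ g * (η * ((ρ g)⁻¹ * μ * ρ g)) * (ρ g)⁻¹ := by rw [hc]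
        _ = (ρ g * η * (ρ g)⁻¹) * μ := by group
    intro g η
    refine ⟨key g η, fun h => ?_⟩
    have h2 := key g⁻¹ _ h
    have h3 : ρ g⁻¹ * (ρ g * η * (ρ g)⁻¹) * (ρ g⁻¹)⁻¹ = η := by
      rw [map_inv]; group
    rwa [h3] at h2
  -- the orbit map of N' is injective
  have hinj' : Function.Injective fun η : ↥N' => (η : Equiv.Perm X) x₀ := by
    intro a b hab
    simp only at hab
    have : (a : Equiv.Perm X) = (b : Equiv.Perm X) := by
      ext w
      obtain ⟨η, hη, hw⟩ := htrans x₀ w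
      have ha := Subgroup.mem_centralizer_iff.1 a.2 η hη
      have hb := Subgroup.mem_centralizer_iff.1 b.2 η hη
      calc (a : Equiv.Perm X) w = ((a : Equiv.Perm X) * η) x₀ := by rw [← hw]; rfl
        _ = ((η : Equiv.Perm X) * a) x₀ := by rw [← ha]
        _ = η ((a : Equiv.Perm X) x₀) := rfl
        _ = η ((b : Equiv.Perm X) x₀) := by rw [hab]
        _ = ((η : Equiv.Perm X) * b) x₀ := rfl
        _ = ((b : Equiv.Perm X) * η) x₀ := by rw [hb]
        _ = (b : Equiv.Perm X) w := by rw [← hw]; rfl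
    exact Subtype.ext this
  -- the orbit map of N' is surjective
  have hsurj' : Function.Surjective fun η : ↥N' => (η : Equiv.Perm X) x₀ := by
    intro y
    obtain ⟨ν, hν, hνx⟩ := htrans x₀ y
    set bN : ↥N ≃ X := Equiv.ofBijective _ horbN with hbN
    set σ : Equiv.Perm X := (bN.symm.trans (Equiv.mulRight (⟨ν, hν⟩ : ↥N))).trans bN with hσdef
    have hσ : ∀ (η : ↥N), σ ((η : Equiv.Perm X) x₀) = ((η : Equiv.Perm X) * ν) x₀ := by
      intro η
      show bN ((Equiv.mulRight (⟨ν, hν⟩ : ↥N)) (bN.symm ((η : Equiv.Perm X) x₀))) = _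
      have h1 : bN.symm ((η : Equiv.Perm X) x₀) = η := by
        rw [Equiv.symm_apply_eq]; rfl
      rw [h1]
      rfl
    have hσmem : σ ∈ N' := by
      rw [hN', Subgroup.mem_centralizer_iff]
      intro μ hμ
      ext w
      obtain ⟨η, hη, hw⟩ := htrans x₀ w
      have lhs : (μ * σ) w = ((μ * η * ν : Equiv.Perm X)) x₀ := by
        rw [← hw]
        show μ (σ ((η : Equiv.Perm X) x₀)) = _
        rw [hσ ⟨η, hη⟩]
        rfl
      have rhs : (σ * μ) w = ((μ * η * ν : Equiv.Perm X)) x₀ := by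
        rw [← hw]
        show σ (μ ((η : Equiv.Perm X) x₀)) = _
        have : μ ((η : Equiv.Perm X) x₀) = ((⟨μ * η, mul_mem hμ hη⟩ : ↥N) : Equiv.Perm X) x₀ := rfl
        rw [this, hσ ⟨μ * η, mul_mem hμ hη⟩]
      rw [lhs, rhs]
    refine ⟨⟨σ, hσmem⟩, ?_⟩
    show σ x₀ = y
    have h1 := hσ 1
    simpa [hνx] using h1
  have hfin' : Finite ↥N' := Finite.of_injective _ hinj'
  cases nonempty_fintype ↥N'
  have hcard' : Fintype.card ↥N' = Fintype.card X :=
    Fintype.card_of_bijective ⟨hinj', hsurj'⟩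
  -- commuting
  have hcommNN' : ∀ a : ↥N, ∀ b : ↥N', Commute (a : Equiv.Perm X) (b : Equiv.Perm X) :=
    fun a b => Subgroup.mem_centralizer_iff.1 b.2 a a.2
  have hcommN'N : ∀ a : ↥N', ∀ b : ↥N, Commute (a : Equiv.Perm X) (b : Equiv.Perm X) :=
    fun a b => (hcommNN' b a).symm
  rw [cond_iff_surj ρ N hnorm hcardN f hf, cond_iff_surj ρ N' hnorm' hcard' f hf]
  constructor
  · exact fun h => surj_transfer N N' x₀ hinj' hcard' hcommNN' f h
  · exact fun h => surj_transfer N' N x₀ horbN.1 hcardN hcommN'N f h
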